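/- arXiv:2211.03995 — 5 statements merged into one kernel-verified Lean document; each statement's English description precedes it below -/
import Mathlib

section
/- For any trie T with n edges (n ≥ 1) and l leaves, the number of maximal palindromes in T is exactly 2n − l, i.e., |MPal(T)| = 2n − l. -/
/-- A trie over alphabet `α`: a finite rooted tree with a parent function,
every node reaches the root by iterating `par`, each non-root node carries the
label of the edge to its parent, and distinct children of a node have
distinct labels. -/
structure Trie (α : Type*) where
  V : Type
  fV : Fintype V
  dV : DecidableEq V
  root : V
  par : V → V
  lab : V → α
  par_root : par root = root
  reaches_root : ∀ v : V, ∃ k : ℕ, par^[k] v = root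
  distinct_labels : ∀ u v : V, u ≠ root → v ≠ root →
    par u = par v → lab u = lab v → u = v

attribute [instance] Trie.fV Trie.dV

namespace Trie

variable {α : Type*}

/-- The depth of a node: its distance to the root. -/
noncomputable def depth (T : Trie α) (v : T.V) : ℕ :=
  Nat.find (T.reaches_root v)

/-- `pref T u k` is the string of the `k` edge labels on the path from `u`
towards the root (read upward). -/
def pref (T : Trie α) : T.V → ℕ → List α
  | _, 0 => []
  | u, k + 1 => T.lab u :: T.pref (T.par u) k

/-- A node is a leaf if it is the parent of no (non-root) node. -/
def IsLeaf (T : Trie α) (u : T.V) : Prop :=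
  ∀ v : T.V, v ≠ T.root → T.par v ≠ u

/-- The set of maximal palindromes in a trie `T`: pairs `(u, k)` such that
`pref T u k` is a palindrome and the maximality conditions of the definition
hold. -/
noncomputable def MPal (T : Trie α) : Set (T.V × ℕ) :=
  { p | p.2 ≤ T.depth p.1 ∧ T.pref p.1 p.2 = (T.pref p.1 p.2).reverse ∧
      (if 1 ≤ p.2 then
        -- (a) `u` is not a leaf and no child extends the palindrome, or
        -- (b) `u` is a leaf, or (c) the occurrence ends at the root
        ((¬ T.IsLeaf p.1 ∧ ∀ u' : T.V, u' ≠ T.root → T.par u' = p.1 →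
            T.pref u' (p.2 + 2) ≠ (T.pref u' (p.2 + 2)).reverse) ∨
          T.IsLeaf p.1 ∨ T.par^[p.2] p.1 = T.root)
      else
        -- the empty palindrome at `u` is maximal iff `u` is neither a leaf
        -- nor the root and no child of `u` has the same label as `u`
        (¬ T.IsLeaf p.1 ∧ p.1 ≠ T.root ∧
          ∀ u' : T.V, u' ≠ T.root → T.par u' = p.1 → T.lab u' ≠ T.lab p.1)) }


variable (T : Trie α)

lemma pref_zero (u : T.V) : T.pref u 0 = [] := rfl

lemma pref_succ' (u : T.V) (k : ℕ) : T.pref u (k+1) = T.lab u :: T.pref (T.par u) k := rfl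

lemma pref_succ (u : T.V) (k : ℕ) :
    T.pref u (k+1) = T.pref u k ++ [T.lab (T.par^[k] u)] := by
  induction k generalizing u with
  | zero => simp [pref]
  | succ k ih =>
    rw [pref_succ', ih, pref_succ']
    simp [Function.iterate_succ_apply]

lemma pal_decomp {u : T.V} {k : ℕ}
    (h : T.pref u (k+2) = (T.pref u (k+2)).reverse) :
    T.lab u = T.lab (T.par^[k+1] u) ∧ T.pref (T.par u) k = (T.pref (T.par u) k).reverse := by
  have e : T.pref u (k+2) = T.lab u :: (T.pref (T.par u) k ++ [T.lab (T.par^[k+1] u)]) := by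
    rw [pref_succ', pref_succ, Function.iterate_succ_apply]
  rw [e] at h
  simp only [List.reverse_cons, List.reverse_append, List.reverse_singleton, List.reverse_nil,
    List.nil_append, List.singleton_append, List.cons_append, List.append_assoc] at h
  rw [List.cons.injEq] at h
  obtain ⟨h1, h2⟩ := h
  refine ⟨h1, ?_⟩
  rw [← h1] at h2
  exact (List.append_inj' h2 rfl).1

-- depth lemmas
lemma par_iterate_depth (u : T.V) : T.par^[T.depth u] u = T.root := Nat.find_spec (T.reaches_root u)

lemma depth_le {u : T.V} {k : ℕ} (h : T.par^[k] u = T.root) : T.depth u ≤ k :=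
  Nat.find_min' _ h

lemma ne_root_of_lt_depth {u : T.V} {k : ℕ} (h : k < T.depth u) : T.par^[k] u ≠ T.root :=
  Nat.find_min _ h

lemma depth_pos {u : T.V} (h : u ≠ T.root) : 0 < T.depth u := by
  rcases Nat.eq_zero_or_pos (T.depth u) with h0 | h0
  · exact absurd (by simpa [h0] using T.par_iterate_depth u) h
  · exact h0

lemma depth_par {u : T.V} (h : u ≠ T.root) : T.depth u = T.depth (T.par u) + 1 := by
  have h1 : 0 < T.depth u := T.depth_pos h
  have hle : T.depth (T.par u) ≤ T.depth u - 1 := by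
    apply T.depth_le
    have hh := T.par_iterate_depth u
    rwa [show T.depth u = (T.depth u - 1) + 1 from by omega, Function.iterate_succ_apply] at hh
  have hge : T.depth u ≤ T.depth (T.par u) + 1 := by
    apply T.depth_le
    rw [Function.iterate_succ_apply]
    exact T.par_iterate_depth (T.par u)
  omega

lemma depth_child {u' u : T.V} (h1 : u' ≠ T.root) (h2 : T.par u' = u) :
    T.depth u' = T.depth u + 1 := by
  rw [T.depth_par h1, h2]

lemma depth_iterate (u : T.V) : ∀ i, i ≤ T.depth u → T.depth (T.par^[i] u) = T.depth u - i := by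
  intro i
  induction i with
  | zero => simp
  | succ i ih =>
    intro h
    have hi := ih (by omega)
    have hne : T.par^[i] u ≠ T.root := T.ne_root_of_lt_depth (by omega)
    rw [Function.iterate_succ_apply']
    have := T.depth_par hne
    omega

lemma depth_lt_card (u : T.V) : T.depth u < Fintype.card T.V := by
  have hinj : Function.Injective (fun i : Fin (T.depth u + 1) => T.par^[i.1] u) := by
    intro i j hij
    have hi := T.depth_iterate u i.1 (by omega)
    have hj := T.depth_iterate u j.1 (by omega)
    simp only at hij
    rw [hij] at hi
    exact Fin.ext (by omega)
  have := Fintype.card_le_of_injective _ hinj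
  simpa using this

lemma depth_root : T.depth T.root = 0 :=
  Nat.le_zero.mp (T.depth_le (by simp))

/-- A palindromic occurrence with center `(w, ε)` and arm length `j`. -/
def Occ (w : T.V) (ε j : ℕ) (u : T.V) : Prop :=
  T.par^[j] u = w ∧ 2*j+ε ≤ T.depth u ∧
    T.pref u (2*j+ε) = (T.pref u (2*j+ε)).reverse

lemma occ_ne_root {w : T.V} {ε j : ℕ} {u : T.V} (h : T.Occ w ε (j+1) u) : u ≠ T.root := by
  intro hu
  have h2 := h.2.1
  rw [hu, T.depth_root] at h2
  omega

lemma occ_restrict {w : T.V} {ε j : ℕ} {u : T.V} (h : T.Occ w ε (j+1) u) :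
    T.Occ w ε j (T.par u) ∧ u ≠ T.root ∧ T.lab u = T.lab (T.par^[2*j+ε+1] u) := by
  obtain ⟨hc, hv, hp⟩ := h
  have hne : u ≠ T.root := T.occ_ne_root ⟨hc, hv, hp⟩
  have e : 2*(j+1)+ε = (2*j+ε)+2 := by omega
  rw [e] at hv hp
  obtain ⟨hlab, hpal⟩ := T.pal_decomp hp
  have hd := T.depth_par hne
  refine ⟨⟨?_, by omega, hpal⟩, hne, hlab⟩
  rw [← Function.iterate_succ_apply]
  exact hc

lemma occ_unique {w : T.V} {ε : ℕ} : ∀ {j : ℕ} {u1 u2 : T.V},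
    T.Occ w ε j u1 → T.Occ w ε j u2 → u1 = u2 := by
  intro j
  induction j with
  | zero =>
    intro u1 u2 h1 h2
    have a1 := h1.1; have a2 := h2.1
    simp only [Function.iterate_zero_apply] at a1 a2
    rw [a1, a2]
  | succ j ih =>
    intro u1 u2 h1 h2
    obtain ⟨ho1, hr1, hl1⟩ := T.occ_restrict h1
    obtain ⟨ho2, hr2, hl2⟩ := T.occ_restrict h2
    have hpar : T.par u1 = T.par u2 := ih ho1 ho2
    apply T.distinct_labels _ _ hr1 hr2 hpar
    rw [hl1, hl2, Function.iterate_succ_apply, Function.iterate_succ_apply, hpar]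

lemma occ_exists_of_le {w : T.V} {ε : ℕ} : ∀ {j : ℕ} {u : T.V} {i : ℕ},
    T.Occ w ε j u → i ≤ j → ∃ v, T.Occ w ε i v := by
  intro j
  induction j with
  | zero => intro u i h hi; interval_cases i; exact ⟨u, h⟩
  | succ j ih =>
    intro u i h hi
    rcases Nat.lt_or_ge i (j+1) with hlt | hge
    · exact ih (T.occ_restrict h).1 (by omega)
    · exact ⟨u, by rwa [show i = j + 1 from by omega]⟩

lemma mpal_no_ext {u : T.V} {k : ℕ} (h : (u, k) ∈ T.MPal) (u' : T.V)
    (h1 : u' ≠ T.root) (h2 : T.par u' = u) (hval : k + 2 ≤ T.depth u')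
    (hpal : T.pref u' (k+2) = (T.pref u' (k+2)).reverse) : False := by
  obtain ⟨hk, hp, hcond⟩ := h
  simp only at hk hp hcond
  have hdu' : T.depth u' = T.depth u + 1 := T.depth_child h1 h2
  by_cases hk1 : 1 ≤ k
  · rw [if_pos hk1] at hcond
    rcases hcond with ⟨-, hno⟩ | hleaf | hroot
    · exact hno u' h1 h2 hpal
    · exact hleaf u' h1 h2
    · have := T.depth_le hroot
      omega
  · rw [if_neg hk1] at hcond
    have hk0 : k = 0 := by omega
    subst hk0
    obtain ⟨hlab, _⟩ := T.pal_decomp hpal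
    rw [Function.iterate_one, h2] at hlab
    exact hcond.2.2 u' h1 h2 hlab

lemma mpal_occ {u : T.V} {k : ℕ} (h : (u, k) ∈ T.MPal) :
    T.Occ (T.par^[k/2] u) (k % 2) (k/2) u := by
  obtain ⟨hk, hp, -⟩ := h
  have e : 2*(k/2) + k%2 = k := by omega
  exact ⟨rfl, by rw [e]; exact hk, by rw [e]; exact hp⟩

lemma mpal_inj_aux {u1 u2 : T.V} {k1 k2 : ℕ} (h1 : (u1,k1) ∈ T.MPal) (h2 : (u2,k2) ∈ T.MPal)
    (hc : T.par^[k1/2] u1 = T.par^[k2/2] u2) (hm : k1 % 2 = k2 % 2)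
    (hlt : k1/2 < k2/2) : False := by
  have o1 : T.Occ (T.par^[k1/2] u1) (k1 % 2) (k1/2) u1 := T.mpal_occ h1
  have o2 : T.Occ (T.par^[k1/2] u1) (k1 % 2) (k2/2) u2 := by
    rw [hc, hm]; exact T.mpal_occ h2
  obtain ⟨v, ov⟩ := T.occ_exists_of_le o2 (show k1/2 + 1 ≤ k2/2 by omega)
  obtain ⟨ovr, hvne, -⟩ := T.occ_restrict ov
  have hpv : T.par v = u1 := T.occ_unique ovr o1
  have e : 2*(k1/2+1) + k1%2 = k1 + 2 := by omega
  refine T.mpal_no_ext h1 v hvne hpv ?_ ?_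
  · have := ov.2.1; omega
  · have := ov.2.2; rwa [e] at this

lemma mpal_injOn :
    Set.InjOn (fun p : T.V × ℕ => (T.par^[p.2/2] p.1, p.2 % 2)) T.MPal := by
  rintro ⟨u1, k1⟩ h1 ⟨u2, k2⟩ h2 heq
  simp only [Prod.mk.injEq] at heq
  obtain ⟨hc, hm⟩ := heq
  have hj : k1/2 = k2/2 := by
    by_contra hne
    rcases Nat.lt_or_ge (k1/2) (k2/2) with h | h
    · exact T.mpal_inj_aux h1 h2 hc hm h
    · exact T.mpal_inj_aux h2 h1 hc.symm hm.symm (by omega)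
  have o1 : T.Occ (T.par^[k1/2] u1) (k1 % 2) (k1/2) u1 := T.mpal_occ h1
  have o2 : T.Occ (T.par^[k1/2] u1) (k1 % 2) (k1/2) u2 := by
    rw [hc, hm, hj]; exact T.mpal_occ h2
  have : u1 = u2 := T.occ_unique o1 o2
  exact Prod.ext this (by omega)

lemma mpal_surj {w : T.V} {ε : ℕ} (hε : ε ≤ 1) (hw : w ≠ T.root)
    (hleaf : ε = 0 → ¬ T.IsLeaf w) :
    ∃ u k, (u, k) ∈ T.MPal ∧ T.par^[k/2] u = w ∧ k % 2 = ε := by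
  classical
  have hdw : 0 < T.depth w := T.depth_pos hw
  set P : ℕ → Prop := fun j => ∃ u, T.Occ w ε j u with hP
  have hP0 : P 0 := by
    refine ⟨w, Function.iterate_zero_apply _ _, by omega, ?_⟩
    interval_cases ε
    · rfl
    · rfl
  have hbound : ∀ j, P j → j ≤ Fintype.card T.V := by
    rintro j ⟨u, hu⟩
    have h1 := hu.2.1
    have h2 := T.depth_lt_card u
    omega
  set j := Nat.findGreatest P (Fintype.card T.V) with hjdef
  obtain ⟨u, hc, hv, hp⟩ : P j := Nat.findGreatest_spec (Nat.zero_le _) hP0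
  have hmax : ¬ P (j+1) := by
    intro hp'
    exact Nat.findGreatest_is_greatest (by omega) (hbound _ hp') hp'
  refine ⟨u, 2*j+ε, ⟨hv, hp, ?_⟩, ?_, by omega⟩
  swap
  · rw [show (2*j+ε)/2 = j from by omega]; exact hc
  by_cases hk1 : 1 ≤ 2*j+ε
  · rw [if_pos hk1]
    by_cases hroot : T.par^[2*j+ε] u = T.root
    · exact Or.inr (Or.inr hroot)
    by_cases hlf : T.IsLeaf u
    · exact Or.inr (Or.inl hlf)
    refine Or.inl ⟨hlf, ?_⟩
    intro u' h1' h2' hpal'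
    apply hmax
    have hlt : 2*j+ε < T.depth u :=
      lt_of_le_of_ne hv (fun hh => hroot (by rw [hh]; exact T.par_iterate_depth u))
    have hdu' : T.depth u' = T.depth u + 1 := T.depth_child h1' h2'
    refine ⟨u', ?_, by omega, ?_⟩
    · rw [Function.iterate_succ_apply, h2']; exact hc
    · rw [show 2*(j+1)+ε = (2*j+ε)+2 from by omega]; exact hpal'
  · rw [if_neg hk1]
    have he : ε = 0 := by omega
    have hj0 : j = 0 := by omega
    have hueq : u = w := by rw [hj0, Function.iterate_zero_apply] at hc; exact hc
    subst hueq
    refine ⟨hleaf he, hw, ?_⟩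
    intro u' h1' h2' hlab
    simp only at h2' hlab
    apply hmax
    have hdu' : T.depth u' = T.depth u + 1 := T.depth_child h1' h2'
    refine ⟨u', ?_, by omega, ?_⟩
    · rw [hj0, Function.iterate_one, h2']
    · rw [hj0, he, show 2*(0+1)+0 = 0+1+1 from by norm_num]
      rw [pref_succ', pref_succ', pref_zero, h2', hlab]
      simp

lemma root_not_leaf (hcard : 2 ≤ Fintype.card T.V) : ¬ T.IsLeaf T.root := by
  obtain ⟨v, hv⟩ : ∃ v : T.V, v ≠ T.root := by
    by_contra hno
    push_neg at hno
    have : Fintype.card T.V ≤ 1 :=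
      Fintype.card_le_one_iff.mpr (fun a b => (hno a).trans (hno b).symm)
    omega
  have hdv : 0 < T.depth v := T.depth_pos hv
  set u := T.par^[T.depth v - 1] v with hu
  have hune : u ≠ T.root := T.ne_root_of_lt_depth (by omega)
  have hpu : T.par u = T.root := by
    have h : T.par^[(T.depth v - 1) + 1] v = T.root := by
      rw [show T.depth v - 1 + 1 = T.depth v from by omega]
      exact T.par_iterate_depth v
    rw [Function.iterate_succ_apply'] at h
    exact h
  exact fun hlf => hlf u hune hpu

lemma mpal_center_mem {u : T.V} {k : ℕ} (h : (u, k) ∈ T.MPal) :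
    T.par^[k/2] u ≠ T.root ∧ (k % 2 = 0 → ¬ T.IsLeaf (T.par^[k/2] u)) := by
  obtain ⟨hk, hp, hcond⟩ := h
  simp only at hk hp hcond
  by_cases hk1 : 1 ≤ k
  · have hlt : k/2 < T.depth u := by omega
    refine ⟨T.ne_root_of_lt_depth hlt, ?_⟩
    intro hmod
    have hk2 : 2 ≤ k := by omega
    have hcne : T.par^[k/2 - 1] u ≠ T.root := T.ne_root_of_lt_depth (by omega)
    have hpc : T.par (T.par^[k/2 - 1] u) = T.par^[k/2] u := by
      have hh := Function.iterate_succ_apply' T.par (k/2 - 1) u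
      rw [← hh, Nat.succ_eq_add_one, show k/2 - 1 + 1 = k/2 from by omega]
    exact fun hlf => (hlf _ hcne) hpc
  · rw [if_neg hk1] at hcond
    have hk0 : k = 0 := by omega
    subst hk0
    exact ⟨by simpa using hcond.2.1, fun _ => by simpa using hcond.1⟩


end Trie

/-- For any trie with `n ≥ 1` edges and `l` leaves, the number of maximal
palindromes is exactly `2n - l`. -/
theorem mpal_count {α : Type*} (T : Trie α) (n l : ℕ)
    (hn : n = Fintype.card T.V - 1)
    (hl : l = Set.ncard { v : T.V | T.IsLeaf v })
    (hn1 : 1 ≤ n) :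
    (T.MPal).ncard = 2 * n - l := by
  classical
  have hcard2 : 2 ≤ Fintype.card T.V := by
    have : 0 < Fintype.card T.V := Fintype.card_pos_iff.mpr ⟨T.root⟩
    omega
  have hrnl : ¬ T.IsLeaf T.root := T.root_not_leaf hcard2
  set f : T.V × ℕ → T.V × ℕ := fun p => (T.par^[p.2/2] p.1, p.2 % 2) with hf
  set S : Set (T.V × ℕ) :=
    {q | (q.2 = 1 ∧ q.1 ≠ T.root) ∨ (q.2 = 0 ∧ q.1 ≠ T.root ∧ ¬ T.IsLeaf q.1)} with hS
  have himg : f '' T.MPal = S := by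
    apply Set.Subset.antisymm
    · rintro ⟨w, e⟩ ⟨⟨u, k⟩, hm, heq⟩
      simp only [hf, Prod.mk.injEq] at heq
      obtain ⟨hw, he⟩ := heq
      have hctr := T.mpal_center_mem hm
      by_cases hk : k % 2 = 1
      · exact Or.inl ⟨by omega, hw ▸ hctr.1⟩
      · exact Or.inr ⟨by omega, hw ▸ hctr.1, hw ▸ hctr.2 (by omega)⟩
    · rintro ⟨w, e⟩ hq
      simp only [hS, Set.mem_setOf_eq] at hq
      rcases hq with ⟨he, hwne⟩ | ⟨he, hwne, hwnl⟩
      · have he' : e = 1 := he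
        obtain ⟨u, k, hm, hc, hmod⟩ := T.mpal_surj (ε := 1) (by norm_num) hwne (by simp)
        refine ⟨(u, k), hm, ?_⟩
        simp only [hf]
        rw [Prod.mk.injEq]
        exact ⟨hc, by omega⟩
      · have he' : e = 0 := he
        obtain ⟨u, k, hm, hc, hmod⟩ := T.mpal_surj (ε := 0) (by norm_num) hwne (fun _ => hwnl)
        refine ⟨(u, k), hm, ?_⟩
        simp only [hf]
        rw [Prod.mk.injEq]
        exact ⟨hc, by omega⟩
  have hncard : T.MPal.ncard = S.ncard := by
    rw [← himg]
    exact (Set.ncard_image_of_injOn T.mpal_injOn).symm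
  set R : Set T.V := {w | w ≠ T.root} with hR
  set Q : Set T.V := {w | w ≠ T.root ∧ ¬ T.IsLeaf w} with hQ
  have hSdecomp : S = (fun w => (w, 1)) '' R ∪ (fun w => (w, 0)) '' Q := by
    ext ⟨w, e⟩
    simp only [hS, hR, hQ, Set.mem_setOf_eq, Set.mem_union, Set.mem_image, Prod.mk.injEq]
    constructor
    · rintro (⟨he, hne⟩ | ⟨he, hne, hnl⟩)
      · exact Or.inl ⟨w, hne, rfl, he.symm⟩
      · exact Or.inr ⟨w, ⟨hne, hnl⟩, rfl, he.symm⟩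
    · rintro (⟨x, hx, rfl, rfl⟩ | ⟨x, hx, rfl, rfl⟩)
      · exact Or.inl ⟨rfl, hx⟩
      · exact Or.inr ⟨rfl, hx.1, hx.2⟩
  have hinj1 : Function.Injective (fun w : T.V => (w, 1)) := fun a b h => by
    simpa using congrArg Prod.fst h
  have hinj0 : Function.Injective (fun w : T.V => (w, 0)) := fun a b h => by
    simpa using congrArg Prod.fst h
  have hdisj : Disjoint ((fun w => (w, 1)) '' R) ((fun w => (w, 0)) '' Q) := by
    rw [Set.disjoint_left]
    rintro ⟨w, e⟩ ⟨x, -, hxe⟩ ⟨y, -, hye⟩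
    have h1 : e = 1 := by simpa using (congrArg Prod.snd hxe).symm
    have h0 : e = 0 := by simpa using (congrArg Prod.snd hye).symm
    omega
  have hUS : S.ncard = R.ncard + Q.ncard := by
    rw [hSdecomp, Set.ncard_union_eq hdisj (R.toFinite.image _) (Q.toFinite.image _),
      Set.ncard_image_of_injective _ hinj1, Set.ncard_image_of_injective _ hinj0]
  have hRcard : R.ncard = n := by
    have hcompl : R = ({T.root} : Set T.V)ᶜ := by
      ext w; simp [hR]
    have := Set.ncard_add_ncard_compl ({T.root} : Set T.V)
    rw [Set.ncard_singleton] at this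
    rw [hcompl, hn]
    have hNat : Nat.card T.V = Fintype.card T.V := Nat.card_eq_fintype_card
    omega
  have hRQ : R = Q ∪ {v | T.IsLeaf v} := by
    ext w
    simp only [hR, hQ, Set.mem_setOf_eq, Set.mem_union]
    constructor
    · intro hne
      by_cases hlf : T.IsLeaf w
      · exact Or.inr hlf
      · exact Or.inl ⟨hne, hlf⟩
    · rintro (⟨hne, -⟩ | hlf)
      · exact hne
      · intro heq; rw [heq] at hlf; exact hrnl hlf
  have hdisj2 : Disjoint Q {v : T.V | T.IsLeaf v} := by
    rw [Set.disjoint_left]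
    rintro w ⟨-, hnl⟩ hlf
    exact hnl hlf
  have hRQcard : R.ncard = Q.ncard + l := by
    rw [hRQ, Set.ncard_union_eq hdisj2 Q.toFinite (Set.toFinite _), hl]
  omega
end

section
/- Any string S of length m contains at most m + 1 distinct palindromic substrings, where the empty string is counted as one of them. -/
/-- `substr S i j` is the substring `S[i..j]` of `S` (1-indexed), which is
empty when `i > j`. -/
def substr {α : Type*} (S : List α) (i j : ℕ) : List α :=
  (S.drop (i - 1)).take (j + 1 - i)

/-- The set of distinct palindromic substrings of `S`, including the empty
string. -/
def DPalStr {α : Type*} (S : List α) : Set (List α) :=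
  { p | (p = [] ∨ ∃ i j : ℕ, 1 ≤ i ∧ i ≤ j ∧ j ≤ S.length ∧ substr S i j = p) ∧
        p = p.reverse }

/-- Any string of length `m` contains at most `m + 1` distinct palindromic
substrings (the empty string being counted as one of them). -/
theorem dpal_str_count {α : Type*} (S : List α) :
    (DPalStr S).Finite ∧ (DPalStr S).ncard ≤ S.length + 1 := by
  set m := S.length with hm
  -- every nonempty palindromic substring is a suffix of some prefix `S.take j`
  have hchar : ∀ p ∈ DPalStr S, p ≠ [] → ∃ j, j ≤ m ∧ p <:+ S.take j := by
    rintro p ⟨hocc, hpal⟩ hne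
    rcases hocc with rfl | ⟨i, j, h1, hij, hjm, hsub⟩
    · exact absurd rfl hne
    refine ⟨j, hjm, ?_⟩
    have heq : substr S i j = (S.take j).drop (i - 1) := by
      unfold substr
      rw [List.drop_take]
      congr 1
      omega
    rw [← hsub, heq]
    exact List.drop_suffix _ _
  set A := DPalStr S \ {[]} with hA
  set f : List α → ℕ := fun p => sInf {j | p <:+ S.take j} with hf
  have hmem : ∀ p ∈ A, p <:+ S.take (f p) ∧ 1 ≤ f p ∧ f p ≤ m := by
    rintro p ⟨hp, hne⟩
    simp only [Set.mem_singleton_iff] at hne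
    obtain ⟨j, hjm, hsuf⟩ := hchar p hp hne
    have hne' : {j | p <:+ S.take j}.Nonempty := ⟨j, hsuf⟩
    have h1 : p <:+ S.take (f p) := Nat.sInf_mem hne'
    have hle : f p ≤ j := Nat.sInf_le hsuf
    have hlenp : 0 < p.length := List.length_pos_iff.mpr hne
    have hlen2 : p.length ≤ (S.take (f p)).length := h1.length_le
    rw [List.length_take] at hlen2
    exact ⟨h1, by omega, le_trans hle hjm⟩
  -- key step: a proper palindromic suffix of a palindromic suffix occurs earlier
  have hkey : ∀ p ∈ A, ∀ q ∈ A, p <:+ q → p ≠ q → f p < f q := by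
    rintro p ⟨⟨_, hppal⟩, hpne⟩ q hqA hsuf hne
    obtain ⟨hq1, _, hq3⟩ := hmem q hqA
    -- p is also a prefix of q
    have hpre : p <+: q := by
      have := hsuf.reverse
      rwa [← hppal, ← hqA.1.2] at this
    obtain ⟨v, hv⟩ := hpre
    set k := f q with hk
    obtain ⟨u, hu⟩ := hq1
    have hvne : v ≠ [] := by
      intro h; apply hne; rw [← hv, h, List.append_nil]
    have hvlen : 0 < v.length := List.length_pos_iff.mpr hvne
    have hlenS : (S.take k).length = k := by
      rw [List.length_take]; omega
    have hlensum : u.length + (p.length + v.length) = k := by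
      have h := congrArg List.length hu
      rw [← hv] at h
      simpa [List.length_append] using h.trans hlenS
    -- p is a suffix of `S.take (k - v.length)`
    have hocc : p <:+ S.take (k - v.length) := by
      have htk : S.take (k - v.length) = u ++ p := by
        have h2 : (S.take k).take (k - v.length) = u ++ p := by
          rw [← hu, ← hv, ← List.append_assoc]
          exact List.take_left' (by simp only [List.length_append]; omega)
        rwa [List.take_take, min_eq_left (by omega)] at h2
      rw [htk]
      exact ⟨u, rfl⟩
    have : f p ≤ k - v.length := Nat.sInf_le hocc
    omega
  have hinj : Set.InjOn f A := by
    intro p hp q hq hfe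
    by_contra hne
    obtain ⟨hp1, _, _⟩ := hmem p hp
    obtain ⟨hq1, _, _⟩ := hmem q hq
    rw [hfe] at hp1
    rcases List.suffix_or_suffix_of_suffix hp1 hq1 with h | h
    · have := hkey p hp q hq h hne
      omega
    · have := hkey q hq p hp h (Ne.symm hne)
      omega
  have himg : f '' A ⊆ Set.Icc 1 m := by
    rintro j ⟨p, hp, rfl⟩
    obtain ⟨_, h1, h2⟩ := hmem p hp
    exact ⟨h1, h2⟩
  have hIccfin : (Set.Icc 1 m).Finite := Set.finite_Icc 1 m
  have hAfin : A.Finite := Set.Finite.of_finite_image (hIccfin.subset himg) hinj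
  have hAcard : A.ncard ≤ m := by
    rw [← Set.ncard_image_of_injOn hinj]
    calc (f '' A).ncard ≤ (Set.Icc 1 m).ncard :=
          Set.ncard_le_ncard himg hIccfin
      _ = m := by
          rw [← Finset.coe_Icc, Set.ncard_coe_finset, Nat.card_Icc]; omega
  have hsub : DPalStr S ⊆ insert [] A := by
    intro p hp
    by_cases h : p = []
    · exact h ▸ Set.mem_insert _ _
    · exact Set.mem_insert_of_mem _ ⟨hp, h⟩
  have hfin : (DPalStr S).Finite := (hAfin.insert []).subset hsub
  refine ⟨hfin, ?_⟩
  calc (DPalStr S).ncard ≤ (insert ([] : List α) A).ncard :=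
        Set.ncard_le_ncard hsub (hAfin.insert [])
    _ ≤ A.ncard + 1 := Set.ncard_insert_le _ _
    _ ≤ m + 1 := by omega
end

section
/- Let p and q be palindromes such that p is a proper prefix of q, and let S be a string in which q occurs at least once. Then the number of starting positions at which p occurs in S is strictly greater than the number of starting positions at which q occurs in S. -/
/-- `p` occurs in `S` at (1-indexed) position `t`, i.e. `S[t..t+|p|-1] = p`. -/
def OccursAt {α : Type*} (p S : List α) (t : ℕ) : Prop :=
  1 ≤ t ∧ t + p.length ≤ S.length + 1 ∧ p <+: S.drop (t - 1)

/-- If `p` and `q` are palindromes, `p` is a proper prefix of `q`, and `q`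
occurs at least once in `S`, then the number of starting positions at which
`p` occurs in `S` is strictly greater than the number of starting positions at
which `q` occurs in `S`. -/
theorem occurrence_count_proper_prefix_palindromes {α : Type*}
    (p q S : List α) (hp : p = p.reverse) (hq : q = q.reverse)
    (hpq : p <+: q) (hlen : p.length < q.length)
    (hocc : ∃ t : ℕ, OccursAt q S t) :
    Set.ncard { t : ℕ | OccursAt p S t } >
      Set.ncard { t : ℕ | OccursAt q S t } := by
  classical
  obtain ⟨t0, ht0⟩ := hocc
  have hsub : {t : ℕ | OccursAt q S t} ⊆ {t : ℕ | OccursAt p S t} := by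
    intro t ht
    obtain ⟨h1, h2, h3⟩ := ht
    exact ⟨h1, le_trans (by omega) h2, hpq.trans h3⟩
  have hfinp : {t : ℕ | OccursAt p S t}.Finite := by
    apply Set.Finite.subset (Set.finite_Iic (S.length + 1))
    intro t ht
    have := ht.2.1
    simp only [Set.mem_Iic]
    omega
  have hfinq := hfinp.subset hsub
  obtain ⟨t, htq, hmax⟩ :=
    Set.Finite.exists_maximalFor id _ hfinq ⟨t0, ht0⟩
  have hsuf : p <:+ q := by
    rw [← List.reverse_prefix, ← hp, ← hq]
    exact hpq
  obtain ⟨u, hu⟩ := hsuf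
  have hul : u.length + p.length = q.length := by
    have := congrArg List.length hu
    simpa using this
  obtain ⟨h1, h2, ⟨r, hr⟩⟩ := htq
  have hupos : 0 < u.length := by omega
  have ht'occ : OccursAt p S (t + u.length) := by
    refine ⟨by omega, by omega, ?_⟩
    have hd : S.drop (t + u.length - 1) = (S.drop (t - 1)).drop u.length := by
      rw [List.drop_drop]
      congr 1
      omega
    rw [hd, ← hr, ← hu, List.append_assoc, List.drop_left]
    exact ⟨r, rfl⟩
  have ht'notq : (t + u.length) ∉ {s : ℕ | OccursAt q S s} := by
    intro hs
    have := hmax (j := t + u.length) hs (by simp)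
    simp only [id_eq] at this
    omega
  have hss : {t : ℕ | OccursAt q S t} ⊂ {t : ℕ | OccursAt p S t} :=
    ⟨hsub, fun h => ht'notq (h ht'occ)⟩
  exact Set.ncard_lt_ncard hss hfinp
end

section
/- Let p and q be palindromes with p a proper prefix of q, let S be a string, and let c be a character. Suppose that every occurrence of p in S is followed by c, i.e., whenever p occurs at position t in S, then t + |p| ≤ |S| and S[t + |p|] = c. Then every occurrence of q in S is followed by c: whenever q occurs at position t in S, then t + |q| ≤ |S| and S[t + |q|] = c. -/
/-- Let `p` and `q` be palindromes with `p` a proper prefix of `q`. If every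
occurrence of `p` in `S` is followed by the character `c`, then every
occurrence of `q` in `S` is followed by `c`. (Here `S[t + |p|]` is the
character at 1-indexed position `t + |p|`, i.e. `S[t + |p| - 1]?` with
0-indexed access.) -/
theorem followed_by_same_char {α : Type*} (p q S : List α) (c : α)
    (hp : p = p.reverse) (hq : q = q.reverse)
    (hpq : p <+: q) (hlen : p.length < q.length)
    (h : ∀ t : ℕ, OccursAt p S t →
      t + p.length ≤ S.length ∧ S[t + p.length - 1]? = some c) :
    ∀ t : ℕ, OccursAt q S t →
      t + q.length ≤ S.length ∧ S[t + q.length - 1]? = some c := by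
  intro t ht
  obtain ⟨h1, h2, hpre⟩ := ht
  -- p is a suffix of q
  have hsuf : p <:+ q := by
    rw [hp, hq]; exact List.reverse_suffix.mpr hpq
  obtain ⟨r, hr⟩ := hsuf
  have hrlen : r.length + p.length = q.length := by
    rw [← hr, List.length_append]
  obtain ⟨u, hu⟩ := hpre
  -- p occurs at t + r.length
  have hocc : OccursAt p S (t + r.length) := by
    refine ⟨le_trans h1 (Nat.le_add_right _ _), ?_, ?_⟩
    · omega
    · have : S.drop (t + r.length - 1) = p ++ u := by
        have hd : t + r.length - 1 = (t - 1) + r.length := by omega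
        rw [hd, ← List.drop_drop, ← hu, ← hr, List.append_assoc, List.drop_left]
      rw [this]
      exact ⟨u, rfl⟩
  obtain ⟨hle, hc⟩ := h (t + r.length) hocc
  constructor
  · omega
  · have : t + q.length - 1 = t + r.length + p.length - 1 := by omega
    rw [this]
    exact hc
end

section
/- Let s be a string and let p be a prefix of s that is a palindrome. If p occurs at exactly one starting position in s (necessarily position 1), then p is the longest prefix of s that is a palindrome. -/
/-- If `p` is a palindromic prefix of `s` occurring at exactly one starting
position in `s`, then `p` is the longest palindromic prefix of `s`. -/
theorem unique_occurrence_longest_pal_prefix {α : Type*} (s p : List α)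
    (hp : p = p.reverse) (hpre : p <+: s)
    (huniq : ∃! t : ℕ, OccursAt p s t) :
    ∀ q : List α, q <+: s → q = q.reverse → q.length ≤ p.length := by
  intro q hq hqpal
  by_contra h
  push_neg at h
  obtain ⟨t, ht, huni⟩ := huniq
  have h1 : OccursAt p s 1 := by
    refine ⟨le_refl 1, ?_, by simpa using hpre⟩
    have := hpre.length_le
    omega
  have hpq : p <+: q := by
    rcases List.prefix_or_prefix_of_prefix hpre hq with h' | h'
    · exact h'
    · exact absurd h'.length_le (by omega)
  have hps : p <:+ q := by
    rw [hp, hqpal]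
    exact List.reverse_suffix.mpr hpq
  obtain ⟨a, ha⟩ := hps
  obtain ⟨r, hr⟩ := hq
  have h2 : OccursAt p s (a.length + 1) := by
    refine ⟨by omega, ?_, ?_⟩
    · have hql : q.length + r.length = s.length := by rw [← hr]; simp
      have : a.length + p.length = q.length := by rw [← ha]; simp
      omega
    · simp only [Nat.add_sub_cancel]
      have : s = a ++ (p ++ r) := by rw [← List.append_assoc, ha, hr]
      rw [this, List.drop_left]
      exact ⟨r, rfl⟩
  have e1 := huni 1 h1
  have e2 := huni (a.length + 1) h2
  have hal : a.length + p.length = q.length := by rw [← ha]; simp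
  omega
end
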